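/- Let y = A·x_S + e where x_S ∈ ℝⁿ is K-sparse with support S, and A satisfies the RIP of order 3K with constant δ_{3K} and of order 4K with constant δ_{4K} < 1. Suppose u^{n-1} is the least-squares solution on an index set U^{n-1} with |U^{n-1}| ≤ 3K, x^{n-1} = H_K(u^{n-1}) with support S^{n-1} ⊆ U^{n-1}, h^n is a set of 2K indices with |(Aᵀ(y − A x^{n-1}))_i| ≥ |(Aᵀ(y − A x^{n-1}))_j| for every i ∈ h^n and j ∉ h^n, and U^n = S^{n-1} ∪ h^n. Then ‖(x_S)_{\overline{U^n}}‖ ≤ ρ_{4K}·‖(x_S)_{\overline{U^{n-1}}}‖ + ( δ_{4K}·√(6(1+δ_{3K}))/(1−δ_{4K}) + √(2(1+δ_{4K})) )·‖e‖. -/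

import Mathlib

open Finset

/-- Euclidean norm of a vector. -/
noncomputable def euclNorm {d : ℕ} (x : Fin d → ℝ) : ℝ := Real.sqrt (∑ i, x i ^ 2)

/-- The support of a vector, as a finite set of indices. -/
noncomputable def supp {d : ℕ} (x : Fin d → ℝ) : Finset (Fin d) :=
  Finset.univ.filter (fun i => x i ≠ 0)

/-- `restrict x T` agrees with `x` on `T` and is zero outside `T`. -/
def restrict {d : ℕ} (x : Fin d → ℝ) (T : Finset (Fin d)) : Fin d → ℝ :=
  fun i => if i ∈ T then x i else 0

/-- `A` satisfies the Restricted Isometry Property of order `L` with constant `δ ∈ (0,1)`. -/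
def RIP {m d : ℕ} (A : Matrix (Fin m) (Fin d) ℝ) (L : ℕ) (δ : ℝ) : Prop :=
  0 < δ ∧ δ < 1 ∧
  ∀ x : Fin d → ℝ, (supp x).card ≤ L →
    (1 - δ) * euclNorm x ^ 2 ≤ euclNorm (A.mulVec x) ^ 2 ∧
    euclNorm (A.mulVec x) ^ 2 ≤ (1 + δ) * euclNorm x ^ 2

/-- `u` is the least-squares solution on the index set `U`: it is supported on `U` and
`y - A u` is orthogonal to `A z` whenever `z` is supported on `U`. -/
def LeastSq {m d : ℕ} (A : Matrix (Fin m) (Fin d) ℝ) (y : Fin m → ℝ)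
    (U : Finset (Fin d)) (u : Fin d → ℝ) : Prop :=
  supp u ⊆ U ∧ ∀ z : Fin d → ℝ, supp z ⊆ U →
    ∑ i, (y i - A.mulVec u i) * A.mulVec z i = 0


namespace CoSaMPAux


variable {m d K : ℕ}

lemma sumsq_nonneg (x : Fin d → ℝ) : 0 ≤ ∑ i, x i ^ 2 := by positivity

lemma euclNorm_nonneg (x : Fin d → ℝ) : 0 ≤ euclNorm x := Real.sqrt_nonneg _

lemma euclNorm_sq (x : Fin d → ℝ) : euclNorm x ^ 2 = ∑ i, x i ^ 2 :=
  Real.sq_sqrt (sumsq_nonneg x)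

lemma euclNorm_eq_sqrt (x : Fin d → ℝ) : euclNorm x = Real.sqrt (∑ i, x i ^ 2) := rfl

lemma euclNorm_le_of_sumsq_le {x : Fin d → ℝ} {c : ℝ} (hc : 0 ≤ c)
    (hle : ∑ i, x i ^ 2 ≤ c ^ 2) : euclNorm x ≤ c := by
  rw [euclNorm_eq_sqrt]
  calc Real.sqrt (∑ i, x i ^ 2) ≤ Real.sqrt (c ^ 2) := Real.sqrt_le_sqrt hle
  _ = c := Real.sqrt_sq hc

lemma sumsq_le_of_euclNorm_le {x : Fin d → ℝ} {c : ℝ} (hle : euclNorm x ≤ c) :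
    ∑ i, x i ^ 2 ≤ c ^ 2 := by
  rw [← euclNorm_sq]
  exact pow_le_pow_left₀ (euclNorm_nonneg x) hle 2

/-- Cauchy–Schwarz. -/
lemma cs (x y : Fin d → ℝ) : ∑ i, x i * y i ≤ euclNorm x * euclNorm y :=
  Real.sum_mul_le_sqrt_mul_sqrt _ _ _

lemma cs_abs (x y : Fin d → ℝ) : |∑ i, x i * y i| ≤ euclNorm x * euclNorm y := by
  rcases abs_cases (∑ i, x i * y i) with ⟨he, -⟩ | ⟨he, -⟩
  · rw [he]; exact cs x y
  · rw [he]
    have := cs x (fun i => - y i)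
    have h2 : euclNorm (fun i => - y i) = euclNorm y := by
      unfold euclNorm; congr 1; apply Finset.sum_congr rfl; intro i _; ring
    simp only [h2] at this
    calc -∑ i, x i * y i = ∑ i, x i * (-y i) := by rw [← Finset.sum_neg_distrib]; congr 1; funext i; ring
    _ ≤ euclNorm x * euclNorm y := this

/-- triangle inequality -/
lemma triangle (x y : Fin d → ℝ) : euclNorm (fun i => x i + y i) ≤ euclNorm x + euclNorm y := by
  apply euclNorm_le_of_sumsq_le (add_nonneg (euclNorm_nonneg x) (euclNorm_nonneg y))
  have hcs := cs x y
  have hx := euclNorm_sq x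
  have hy := euclNorm_sq y
  have hexp : ∑ i, (x i + y i) ^ 2 = (∑ i, x i ^ 2) + 2 * (∑ i, x i * y i) + ∑ i, y i ^ 2 := by
    simp_rw [add_sq]
    rw [Finset.sum_add_distrib, Finset.sum_add_distrib, Finset.mul_sum]
    simp_rw [mul_assoc]
  rw [hexp, ← hx, ← hy]; nlinarith [euclNorm_nonneg x, euclNorm_nonneg y]



lemma supp_subset_iff {x : Fin d → ℝ} {T : Finset (Fin d)} :
    (Finset.univ.filter (fun i => x i ≠ 0)) ⊆ T ↔ ∀ i, i ∉ T → x i = 0 := by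
  constructor
  · intro hs i hiT
    by_contra hxi
    exact hiT (hs (by simp [hxi]))
  · intro h i hi
    simp only [Finset.mem_filter] at hi
    by_contra hiT
    exact hi.2 (h i hiT)

lemma sumsq_restrict (x : Fin d → ℝ) (T : Finset (Fin d)) :
    ∑ i, (if i ∈ T then x i else 0) ^ 2 = ∑ i ∈ T, x i ^ 2 := by
  rw [← Finset.sum_filter_add_sum_filter_not Finset.univ (fun i => i ∈ T)]
  have h1 : Finset.univ.filter (fun i => i ∈ T) = T := by ext i; simp
  have h2 : ∀ i ∈ Finset.univ.filter (fun i => i ∉ T), (if i ∈ T then x i else 0) ^ 2 = 0 := by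
    intro i hi; simp only [Finset.mem_filter] at hi; simp [hi.2]
  rw [Finset.sum_eq_zero h2, add_zero]
  apply Finset.sum_congr h1
  intro i hi; simp [hi]

lemma sum_restrict_mul (x y : Fin d → ℝ) (T : Finset (Fin d)) :
    ∑ i, (if i ∈ T then x i else 0) * y i = ∑ i ∈ T, x i * y i := by
  rw [← Finset.sum_filter_add_sum_filter_not Finset.univ (fun i => i ∈ T)]
  have h1 : Finset.univ.filter (fun i => i ∈ T) = T := by ext i; simp
  have h2 : ∀ i ∈ Finset.univ.filter (fun i => i ∉ T), (if i ∈ T then x i else 0) * y i = 0 := by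
    intro i hi; simp only [Finset.mem_filter] at hi; simp [hi.2]
  rw [Finset.sum_eq_zero h2, add_zero]
  apply Finset.sum_congr h1
  intro i hi; simp [hi]

lemma adjoint_dot (A : Matrix (Fin m) (Fin d) ℝ) (x : Fin d → ℝ) (y : Fin m → ℝ) :
    ∑ i, A.mulVec x i * y i = ∑ j, x j * A.transpose.mulVec y j := by
  have h1 : ∑ i, A.mulVec x i * y i = dotProduct y (A.mulVec x) := by
    unfold dotProduct; apply Finset.sum_congr rfl; intro i _; ring
  rw [h1, Matrix.dotProduct_mulVec, ← Matrix.mulVec_transpose]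
  unfold dotProduct
  apply Finset.sum_congr rfl; intro j _; ring



lemma euclNorm_sq' (x : Fin d → ℝ) : euclNorm x ^ 2 = ∑ i, x i ^ 2 :=
  Real.sq_sqrt (by positivity)

lemma mulVec_lam_add (A : Matrix (Fin m) (Fin d) ℝ) (v w : Fin d → ℝ) (j : Fin m) :
    A.mulVec (fun i => v i + w i) j = A.mulVec v j + A.mulVec w j := by
  unfold Matrix.mulVec dotProduct
  rw [← Finset.sum_add_distrib]
  exact Finset.sum_congr rfl (fun i _ => by ring)

lemma mulVec_lam_sub (A : Matrix (Fin m) (Fin d) ℝ) (v w : Fin d → ℝ) (j : Fin m) :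
    A.mulVec (fun i => v i - w i) j = A.mulVec v j - A.mulVec w j := by
  unfold Matrix.mulVec dotProduct
  rw [← Finset.sum_sub_distrib]
  exact Finset.sum_congr rfl (fun i _ => by ring)

lemma mulVec_lam_smul (A : Matrix (Fin m) (Fin d) ℝ) (c : ℝ) (v : Fin d → ℝ) (j : Fin m) :
    A.mulVec (fun i => c * v i) j = c * A.mulVec v j := by
  unfold Matrix.mulVec dotProduct
  rw [Finset.mul_sum]
  exact Finset.sum_congr rfl (fun i _ => by ring)

lemma euclNorm_smul (c : ℝ) (x : Fin d → ℝ) :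
    euclNorm (fun i => c * x i) = |c| * euclNorm x := by
  unfold euclNorm
  rw [show ∑ i, (c * x i) ^ 2 = c ^ 2 * ∑ i, x i ^ 2 by
        rw [Finset.mul_sum]; exact Finset.sum_congr rfl (fun i _ => by ring),
      Real.sqrt_mul (sq_nonneg c), Real.sqrt_sq_eq_abs]

lemma euclNorm_zero_iff (x : Fin d → ℝ) : euclNorm x = 0 ↔ ∀ i, x i = 0 := by
  unfold euclNorm
  rw [Real.sqrt_eq_zero (by positivity)]
  constructor
  · intro hs i
    have := (Finset.sum_eq_zero_iff_of_nonneg (fun j _ => sq_nonneg (x j))).1 hs i (Finset.mem_univ i)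
    exact pow_eq_zero_iff (by norm_num) |>.1 this
  · intro hx; apply Finset.sum_eq_zero; intro i _; rw [hx i]; ring

lemma supp_lam_smul_subset (c : ℝ) (x : Fin d → ℝ) : supp (fun i => c * x i) ⊆ supp x := by
  intro i hi
  simp only [supp, Finset.mem_filter, Finset.mem_univ, true_and] at hi ⊢
  intro hx; exact hi (by rw [hx]; ring)

lemma supp_lam_add_subset (x y : Fin d → ℝ) : supp (fun i => x i + y i) ⊆ supp x ∪ supp y := by
  intro i hi
  simp only [supp, Finset.mem_filter, Finset.mem_union, Finset.mem_univ, true_and] at hi ⊢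
  by_contra hc
  push_neg at hc
  exact hi (by rw [hc.1, hc.2]; ring)

lemma supp_lam_sub_subset (x y : Fin d → ℝ) : supp (fun i => x i - y i) ⊆ supp x ∪ supp y := by
  intro i hi
  simp only [supp, Finset.mem_filter, Finset.mem_union, Finset.mem_univ, true_and] at hi ⊢
  by_contra hc
  push_neg at hc
  exact hi (by rw [hc.1, hc.2]; ring)

lemma sumsq_add_expand (x y : Fin d → ℝ) :
    ∑ i, (x i + y i) ^ 2 = (∑ i, x i ^ 2) + 2 * (∑ i, x i * y i) + ∑ i, y i ^ 2 := by
  rw [show (∑ i, x i ^2) + 2 * (∑ i, x i * y i) + ∑ i, y i^2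
      = ∑ i, (x i ^2 + 2 * (x i * y i) + y i ^2) by
    rw [Finset.sum_add_distrib, Finset.sum_add_distrib, Finset.mul_sum]]
  exact Finset.sum_congr rfl (fun i _ => by ring)

lemma sumsq_sub_expand (x y : Fin d → ℝ) :
    ∑ i, (x i - y i) ^ 2 = (∑ i, x i ^ 2) - 2 * (∑ i, x i * y i) + ∑ i, y i ^ 2 := by
  rw [show (∑ i, x i ^2) - 2 * (∑ i, x i * y i) + ∑ i, y i^2
      = ∑ i, (x i ^2 - 2 * (x i * y i) + y i ^2) by
    rw [Finset.sum_add_distrib, Finset.sum_sub_distrib, Finset.mul_sum]]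
  exact Finset.sum_congr rfl (fun i _ => by ring)

/-- RIP inner-product bound for unit vectors. -/
lemma rip_inner_unit {A : Matrix (Fin m) (Fin d) ℝ} {L : ℕ} {δ : ℝ} (hA : RIP A L δ)
    {v w : Fin d → ℝ} (hv : euclNorm v = 1) (hw : euclNorm w = 1)
    (hcard : (supp v ∪ supp w).card ≤ L) :
    |(∑ i, A.mulVec v i * A.mulVec w i) - ∑ i, v i * w i| ≤ δ := by
  obtain ⟨-, -, hrip⟩ := hA
  have hcp : (supp (fun i => v i + w i)).card ≤ L :=
    le_trans (Finset.card_le_card (supp_lam_add_subset v w)) hcard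
  have hcm : (supp (fun i => v i - w i)).card ≤ L :=
    le_trans (Finset.card_le_card (supp_lam_sub_subset v w)) hcard
  obtain ⟨hp1, hp2⟩ := hrip _ hcp
  obtain ⟨hm1, hm2⟩ := hrip _ hcm
  have hvs : ∑ i, v i ^ 2 = 1 := by rw [← euclNorm_sq', hv]; norm_num
  have hws : ∑ i, w i ^ 2 = 1 := by rw [← euclNorm_sq', hw]; norm_num
  -- norms of sums
  have hnp : euclNorm (fun i => v i + w i) ^ 2 = 2 + 2 * ∑ i, v i * w i := by
    rw [euclNorm_sq', sumsq_add_expand, hvs, hws]; ring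
  have hnm : euclNorm (fun i => v i - w i) ^ 2 = 2 - 2 * ∑ i, v i * w i := by
    rw [euclNorm_sq', sumsq_sub_expand, hvs, hws]; ring
  have hAp : euclNorm (A.mulVec (fun i => v i + w i)) ^ 2
      = (∑ i, A.mulVec v i ^ 2) + 2 * (∑ i, A.mulVec v i * A.mulVec w i)
        + ∑ i, A.mulVec w i ^ 2 := by
    rw [euclNorm_sq']
    rw [show ∑ i, A.mulVec (fun i => v i + w i) i ^ 2
        = ∑ i, (A.mulVec v i + A.mulVec w i) ^ 2 from
      Finset.sum_congr rfl (fun i _ => by rw [mulVec_lam_add])]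
    exact sumsq_add_expand _ _
  have hAm : euclNorm (A.mulVec (fun i => v i - w i)) ^ 2
      = (∑ i, A.mulVec v i ^ 2) - 2 * (∑ i, A.mulVec v i * A.mulVec w i)
        + ∑ i, A.mulVec w i ^ 2 := by
    rw [euclNorm_sq']
    rw [show ∑ i, A.mulVec (fun i => v i - w i) i ^ 2
        = ∑ i, (A.mulVec v i - A.mulVec w i) ^ 2 from
      Finset.sum_congr rfl (fun i _ => by rw [mulVec_lam_sub])]
    exact sumsq_sub_expand _ _
  rw [hnp, hAp] at hp1 hp2
  rw [hnm, hAm] at hm1 hm2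
  rw [abs_le]
  constructor <;> nlinarith



/-- RIP inner-product bound, general version. -/
lemma rip_inner {A : Matrix (Fin m) (Fin d) ℝ} {L : ℕ} {δ : ℝ} (hA : RIP A L δ)
    (v w : Fin d → ℝ) (hcard : (supp v ∪ supp w).card ≤ L) :
    |(∑ i, A.mulVec v i * A.mulVec w i) - ∑ i, v i * w i|
      ≤ δ * euclNorm v * euclNorm w := by
  rcases eq_or_lt_of_le (euclNorm_nonneg v) with hv0 | hv0
  · have hz := (euclNorm_zero_iff v).1 hv0.symm
    have hAz : ∀ j, A.mulVec v j = 0 := by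
      intro j; unfold Matrix.mulVec dotProduct
      apply Finset.sum_eq_zero; intro i _; rw [hz i]; ring
    have : ∀ i, A.mulVec v i * A.mulVec w i = (0:ℝ) := fun i => by rw [hAz i]; ring
    rw [Finset.sum_eq_zero (fun i _ => this i), Finset.sum_eq_zero (fun i _ => by rw [hz i, zero_mul] : ∀ i ∈ Finset.univ, v i * w i = 0)]
    simp only [sub_zero, abs_zero]
    exact mul_nonneg (mul_nonneg (le_of_lt hA.1) (euclNorm_nonneg v)) (euclNorm_nonneg w)
  rcases eq_or_lt_of_le (euclNorm_nonneg w) with hw0 | hw0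
  · have hz := (euclNorm_zero_iff w).1 hw0.symm
    have hAz : ∀ j, A.mulVec w j = 0 := by
      intro j; unfold Matrix.mulVec dotProduct
      apply Finset.sum_eq_zero; intro i _; rw [hz i]; ring
    have h1 : ∀ i, A.mulVec v i * A.mulVec w i = (0:ℝ) := fun i => by rw [hAz i]; ring
    rw [Finset.sum_eq_zero (fun i _ => h1 i), Finset.sum_eq_zero (fun i _ => by rw [hz i, mul_zero] : ∀ i ∈ Finset.univ, v i * w i = 0)]
    simp only [sub_zero, abs_zero]
    exact mul_nonneg (mul_nonneg (le_of_lt hA.1) (euclNorm_nonneg v)) (euclNorm_nonneg w)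
  set c := (euclNorm v)⁻¹ with hc
  set c' := (euclNorm w)⁻¹ with hc'
  have hcpos : 0 < c := inv_pos.2 hv0
  have hc'pos : 0 < c' := inv_pos.2 hw0
  have hv1 : euclNorm (fun i => c * v i) = 1 := by
    rw [euclNorm_smul, abs_of_pos hcpos, hc, inv_mul_cancel₀ (ne_of_gt hv0)]
  have hw1 : euclNorm (fun i => c' * w i) = 1 := by
    rw [euclNorm_smul, abs_of_pos hc'pos, hc', inv_mul_cancel₀ (ne_of_gt hw0)]
  have hcard' : (supp (fun i => c * v i) ∪ supp (fun i => c' * w i)).card ≤ L := by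
    refine le_trans (Finset.card_le_card ?_) hcard
    exact Finset.union_subset_union (supp_lam_smul_subset c v) (supp_lam_smul_subset c' w)
  have hkey := rip_inner_unit hA hv1 hw1 hcard'
  have e1 : ∑ i, A.mulVec (fun i => c * v i) i * A.mulVec (fun i => c' * w i) i
      = c * c' * ∑ i, A.mulVec v i * A.mulVec w i := by
    rw [Finset.mul_sum]
    exact Finset.sum_congr rfl (fun i _ => by rw [mulVec_lam_smul, mulVec_lam_smul]; ring)
  have e2 : ∑ i, (c * v i) * (c' * w i) = c * c' * ∑ i, v i * w i := by
    rw [Finset.mul_sum]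
    exact Finset.sum_congr rfl (fun i _ => by ring)
  rw [e1, e2, ← mul_sub, abs_mul, abs_of_pos (mul_pos hcpos hc'pos)] at hkey
  have hcc : 0 < c * c' := mul_pos hcpos hc'pos
  calc |(∑ i, A.mulVec v i * A.mulVec w i) - ∑ i, v i * w i|
      = (c * c' * |(∑ i, A.mulVec v i * A.mulVec w i) - ∑ i, v i * w i|) * (euclNorm v * euclNorm w) := by
        rw [hc, hc']; field_simp
    _ ≤ δ * (euclNorm v * euclNorm w) := by
        apply mul_le_mul_of_nonneg_right hkey (mul_nonneg (euclNorm_nonneg v) (euclNorm_nonneg w))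
    _ = δ * euclNorm v * euclNorm w := by ring


lemma supp_restrict_subset (x : Fin d → ℝ) (T : Finset (Fin d)) : supp (_root_.restrict x T) ⊆ T := by
  intro i hi
  simp only [supp, _root_.restrict, Finset.mem_filter, Finset.mem_univ, true_and] at hi
  by_contra hiT
  simp [hiT] at hi

/-- `‖Ax‖ ≤ √(1+δ)‖x‖` for `L`-sparse `x`. -/
lemma rip_upper {A : Matrix (Fin m) (Fin d) ℝ} {L : ℕ} {δ : ℝ} (hA : RIP A L δ)
    {x : Fin d → ℝ} (hx : (supp x).card ≤ L) :
    euclNorm (A.mulVec x) ≤ Real.sqrt (1 + δ) * euclNorm x := by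
  have h := (hA.2.2 x hx).2
  have h1δ : (0:ℝ) ≤ 1 + δ := by linarith [hA.1]
  calc euclNorm (A.mulVec x) = Real.sqrt (euclNorm (A.mulVec x) ^ 2) :=
        (Real.sqrt_sq (euclNorm_nonneg _)).symm
    _ ≤ Real.sqrt ((1 + δ) * euclNorm x ^ 2) := Real.sqrt_le_sqrt h
    _ = Real.sqrt (1 + δ) * euclNorm x := by
        rw [Real.sqrt_mul h1δ, Real.sqrt_sq (euclNorm_nonneg x)]




/-- correlation bound: `‖((AᵀA - I)v)_W‖ ≤ δ‖v‖`. -/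
lemma rip_corr {A : Matrix (Fin m) (Fin d) ℝ} {L : ℕ} {δ : ℝ} (hA : RIP A L δ)
    (v : Fin d → ℝ) (W : Finset (Fin d)) (hcard : (W ∪ supp v).card ≤ L) :
    euclNorm (_root_.restrict (fun j => A.transpose.mulVec (A.mulVec v) j - v j) W)
      ≤ δ * euclNorm v := by
  set g : Fin d → ℝ := fun j => A.transpose.mulVec (A.mulVec v) j - v j with hg
  set q : Fin d → ℝ := _root_.restrict g W with hq
  have hsuppq : supp q ⊆ W := supp_restrict_subset g W
  have hqg : ∀ i, q i ^ 2 = q i * g i := by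
    intro i
    by_cases hiW : i ∈ W
    · simp [hq, _root_.restrict, hiW]; ring
    · simp [hq, _root_.restrict, hiW]
  have key : euclNorm q ^ 2 = (∑ i, A.mulVec q i * A.mulVec v i) - ∑ i, q i * v i := by
    rw [euclNorm_sq', Finset.sum_congr rfl (fun i _ => hqg i)]
    rw [adjoint_dot A q (A.mulVec v)]
    rw [← Finset.sum_sub_distrib]
    apply Finset.sum_congr rfl
    intro i _
    rw [hg]; ring
  have hcard' : (supp q ∪ supp v).card ≤ L := by
    refine le_trans (Finset.card_le_card (Finset.union_subset_union hsuppq (subset_refl _))) hcard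
  have hbound : euclNorm q ^ 2 ≤ δ * euclNorm q * euclNorm v := by
    rw [key]
    calc (∑ i, A.mulVec q i * A.mulVec v i) - ∑ i, q i * v i
        ≤ |(∑ i, A.mulVec q i * A.mulVec v i) - ∑ i, q i * v i| := le_abs_self _
      _ ≤ δ * euclNorm q * euclNorm v := rip_inner hA q v hcard'
  have hδv : 0 ≤ δ * euclNorm v := mul_nonneg (le_of_lt hA.1) (euclNorm_nonneg v)
  rcases eq_or_lt_of_le (euclNorm_nonneg q) with h0 | h0
  · rw [← h0]; exact hδv
  · nlinarith

/-- error bound: `‖(Aᵀe)_W‖ ≤ √(1+δ)‖e‖`. -/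
lemma rip_err {A : Matrix (Fin m) (Fin d) ℝ} {L : ℕ} {δ : ℝ} (hA : RIP A L δ)
    (e : Fin m → ℝ) (W : Finset (Fin d)) (hcard : W.card ≤ L) :
    euclNorm (_root_.restrict (A.transpose.mulVec e) W)
      ≤ Real.sqrt (1 + δ) * euclNorm e := by
  set g : Fin d → ℝ := A.transpose.mulVec e with hg
  set q : Fin d → ℝ := _root_.restrict g W with hq
  have hsuppq : supp q ⊆ W := supp_restrict_subset g W
  have hqg : ∀ i, q i ^ 2 = q i * g i := by
    intro i
    by_cases hiW : i ∈ W
    · simp [hq, _root_.restrict, hiW]; ring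
    · simp [hq, _root_.restrict, hiW]
  have key : euclNorm q ^ 2 = ∑ j, A.mulVec q j * e j := by
    rw [euclNorm_sq', Finset.sum_congr rfl (fun i _ => hqg i), adjoint_dot A q e]
  have hbound : euclNorm q ^ 2 ≤ Real.sqrt (1 + δ) * euclNorm q * euclNorm e := by
    rw [key]
    calc ∑ j, A.mulVec q j * e j ≤ euclNorm (A.mulVec q) * euclNorm e := cs _ _
      _ ≤ (Real.sqrt (1 + δ) * euclNorm q) * euclNorm e := by
          apply mul_le_mul_of_nonneg_right _ (euclNorm_nonneg e)
          exact rip_upper hA (le_trans (Finset.card_le_card hsuppq) hcard)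
      _ = Real.sqrt (1 + δ) * euclNorm q * euclNorm e := by ring
  have hδe : 0 ≤ Real.sqrt (1 + δ) * euclNorm e :=
    mul_nonneg (Real.sqrt_nonneg _) (euclNorm_nonneg e)
  rcases eq_or_lt_of_le (euclNorm_nonneg q) with h0 | h0
  · rw [← h0]; exact hδe
  · nlinarith



lemma sqrt_le_of_sq {X B : ℝ} (hB : 0 ≤ B) (h : X ≤ B ^ 2) : Real.sqrt X ≤ B := by
  calc Real.sqrt X ≤ Real.sqrt (B ^ 2) := Real.sqrt_le_sqrt h
    _ = B := Real.sqrt_sq hB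

lemma self_le_sqrt_add {a W : ℝ} (hW : 0 ≤ W) : W ≤ Real.sqrt (a ^ 2 + W ^ 2) := by
  calc W = Real.sqrt (W ^ 2) := (Real.sqrt_sq hW).symm
    _ ≤ Real.sqrt (a ^ 2 + W ^ 2) := Real.sqrt_le_sqrt (by nlinarith [sq_nonneg a])

/-- `√(a² + (P+Q)²) ≤ √(a²+P²) + Q`. -/
lemma sqrt_add_sq_le {a P Q : ℝ} (hP : 0 ≤ P) (hQ : 0 ≤ Q) :
    Real.sqrt (a ^ 2 + (P + Q) ^ 2) ≤ Real.sqrt (a ^ 2 + P ^ 2) + Q := by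
  have h1 : P ≤ Real.sqrt (a ^ 2 + P ^ 2) := self_le_sqrt_add hP
  have h2 : 0 ≤ Real.sqrt (a ^ 2 + P ^ 2) := Real.sqrt_nonneg _
  have h3 : Real.sqrt (a ^ 2 + P ^ 2) ^ 2 = a ^ 2 + P ^ 2 :=
    Real.sq_sqrt (by positivity)
  apply sqrt_le_of_sq (by linarith)
  nlinarith

/-- 1-Lipschitz property of `w ↦ √(a²+w²)` (one-sided). -/
lemma sqrt_lip {a W w : ℝ} (hW : 0 ≤ W) (hw : W ≤ w) :
    Real.sqrt (a ^ 2 + w ^ 2) ≤ Real.sqrt (a ^ 2 + W ^ 2) + (w - W) := by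
  have h1 : W ≤ Real.sqrt (a ^ 2 + W ^ 2) := self_le_sqrt_add hW
  have h3 : Real.sqrt (a ^ 2 + W ^ 2) ^ 2 = a ^ 2 + W ^ 2 :=
    Real.sq_sqrt (by positivity)
  apply sqrt_le_of_sq (by linarith [Real.sqrt_nonneg (a ^ 2 + W ^ 2)])
  nlinarith

/-- Solve the implicit inequality `w ≤ δ√(a²+w²) + c`. -/
lemma solve_implicit {δ a c w : ℝ} (hδ0 : 0 < δ) (hδ1 : δ < 1) (ha : 0 ≤ a)
    (hc : 0 ≤ c) (hw : 0 ≤ w)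
    (hineq : w ≤ δ * Real.sqrt (a ^ 2 + w ^ 2) + c) :
    w ≤ δ / Real.sqrt (1 - δ ^ 2) * a + c / (1 - δ) := by
  set s : ℝ := Real.sqrt (1 - δ ^ 2) with hs
  have hspos : 0 < s := Real.sqrt_pos.2 (by nlinarith)
  have hssq : s ^ 2 = 1 - δ ^ 2 := Real.sq_sqrt (by nlinarith)
  set P : ℝ := δ / s * a with hP
  set Q : ℝ := c / (1 - δ) with hQ
  have hPpos : 0 ≤ P := by positivity
  have hQpos : 0 ≤ Q := div_nonneg hc (by linarith)
  set W : ℝ := P + Q with hW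
  have hWpos : 0 ≤ W := by positivity
  -- √(a² + P²) = a / s
  have haP : Real.sqrt (a ^ 2 + P ^ 2) = a / s := by
    rw [show a ^ 2 + P ^ 2 = (a / s) ^ 2 by
      field_simp [hP]
      rw [hP, div_mul_eq_mul_div, div_pow, add_mul, div_mul_cancel₀ _ (pow_ne_zero 2 (ne_of_gt hspos))]
      linear_combination a ^ 2 * hssq]
    exact Real.sqrt_sq (by positivity)
  by_cases hcase : w ≤ W
  · exact hcase
  push_neg at hcase
  have hne : (1:ℝ) - δ ≠ 0 := by linarith
  have hlip := sqrt_lip (a := a) hWpos (le_of_lt hcase)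
  have h2 : Real.sqrt (a ^ 2 + W ^ 2) ≤ a / s + Q := by
    rw [← haP]; exact sqrt_add_sq_le hPpos hQpos
  have hcW : c = (1 - δ) * Q := by rw [hQ]; field_simp
  have hPas : P = δ * (a / s) := by rw [hP]; ring
  have hkey : w ≤ δ * (Real.sqrt (a ^ 2 + W ^ 2) + (w - W)) + c := by
    calc w ≤ δ * Real.sqrt (a ^ 2 + w ^ 2) + c := hineq
      _ ≤ δ * (Real.sqrt (a ^ 2 + W ^ 2) + (w - W)) + c := by nlinarith
  have hfin : (1 - δ) * (w - W) ≤ 0 := by nlinarith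
  nlinarith




lemma zero_of_not_mem_supp {x : Fin d → ℝ} {i : Fin d} (hi : i ∉ supp x) : x i = 0 := by
  by_contra hxi
  exact hi (by simp [supp, hxi])

lemma sum_if_split (T : Finset (Fin d)) (f g : Fin d → ℝ) :
    ∑ i, (if i ∈ T then f i else g i) = (∑ i ∈ T, f i) + ∑ i ∈ Tᶜ, g i := by
  rw [← Finset.sum_filter_add_sum_filter_not Finset.univ (fun i => i ∈ T)]
  congr 1
  · rw [show Finset.univ.filter (fun i => i ∈ T) = T by ext i; simp]
    apply Finset.sum_congr rfl; intro i hi; simp [hi]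
  · rw [show Finset.univ.filter (fun i => i ∉ T) = Tᶜ by ext i; simp]
    apply Finset.sum_congr rfl; intro i hi
    simp only [Finset.mem_compl] at hi; simp [hi]

/-- sum domination by pointwise comparison and cardinality. -/
lemma sum_dom {ι : Type*} [DecidableEq ι] (s t : Finset ι) (f : ι → ℝ) (hnn : ∀ i, 0 ≤ f i)
    (hcard : s.card ≤ t.card) (hdom : ∀ j ∈ s, ∀ i ∈ t, f j ≤ f i) :
    ∑ i ∈ s, f i ≤ ∑ i ∈ t, f i := by
  rcases s.eq_empty_or_nonempty with hs | hs
  · rw [hs]; simp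
    exact Finset.sum_nonneg (fun i _ => hnn i)
  · have ht : t.Nonempty := by
      rw [← Finset.card_pos]
      exact lt_of_lt_of_le (Finset.card_pos.2 hs) hcard
    obtain ⟨i₀, hi₀t, hmin⟩ := t.exists_min_image f ht
    calc ∑ i ∈ s, f i ≤ s.card • f i₀ :=
          Finset.sum_le_card_nsmul s f (f i₀) (fun j hj => hdom j hj i₀ hi₀t)
      _ ≤ t.card • f i₀ := by
          rw [nsmul_eq_mul, nsmul_eq_mul]
          exact mul_le_mul_of_nonneg_right (by exact_mod_cast hcard) (hnn i₀)
      _ ≤ ∑ i ∈ t, f i := Finset.card_nsmul_le_sum t f (f i₀) hmin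

/-- Hard-thresholding lemma with constant 3. -/
lemma threshold_lemma (u z : Fin d → ℝ) (T : Finset (Fin d))
    (hSz : (supp z).card ≤ T.card)
    (hdom : ∀ i ∈ T, ∀ j ∉ T, |u j| ≤ |u i|) :
    ∑ i, (z i - _root_.restrict u T i) ^ 2 ≤ 3 * ∑ i, (z i - u i) ^ 2 := by
  set Sz := supp z with hSzdef
  have hz0 : ∀ i, i ∉ Sz → z i = 0 := fun i hi => zero_of_not_mem_supp hi
  -- split LHS
  have hsplit : ∑ i, (z i - _root_.restrict u T i) ^ 2
      = (∑ i ∈ T, (z i - u i) ^ 2) + ∑ i ∈ Tᶜ, z i ^ 2 := by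
    rw [← sum_if_split T (fun i => (z i - u i) ^ 2) (fun i => z i ^ 2)]
    apply Finset.sum_congr rfl
    intro i _
    by_cases hiT : i ∈ T <;> simp [_root_.restrict, hiT]
  -- off-T part lives on Sz \ T
  have hoff : ∑ i ∈ Tᶜ, z i ^ 2 = ∑ i ∈ Sz \ T, z i ^ 2 := by
    symm
    apply Finset.sum_subset
    · intro i hi
      rw [Finset.mem_compl]
      exact (Finset.mem_sdiff.1 hi).2
    · intro i hit hins
      have : i ∉ Sz := by
        intro hiSz
        exact hins (Finset.mem_sdiff.2 ⟨hiSz, Finset.mem_compl.1 hit⟩)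
      rw [hz0 i this]; ring
  -- pointwise z² ≤ 2(z-u)² + 2u²
  have hptw : ∑ i ∈ Sz \ T, z i ^ 2
      ≤ 2 * (∑ i ∈ Sz \ T, (z i - u i) ^ 2) + 2 * ∑ i ∈ Sz \ T, u i ^ 2 := by
    rw [Finset.mul_sum, Finset.mul_sum, ← Finset.sum_add_distrib]
    apply Finset.sum_le_sum
    intro i _
    nlinarith [sq_nonneg (z i - 2 * u i)]
  -- domination: ∑_{Sz\T} u² ≤ ∑_{T\Sz} u²
  have hcard2 : (Sz \ T).card ≤ (T \ Sz).card := by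
    have h1 : (Sz \ T).card + (Sz ∩ T).card = Sz.card := Finset.card_sdiff_add_card_inter Sz T
    have h2 : (T \ Sz).card + (T ∩ Sz).card = T.card := Finset.card_sdiff_add_card_inter T Sz
    rw [Finset.inter_comm] at h1
    omega
  have hdom2 : ∑ i ∈ Sz \ T, u i ^ 2 ≤ ∑ i ∈ T \ Sz, u i ^ 2 := by
    apply sum_dom _ _ _ (fun i => sq_nonneg (u i)) hcard2
    intro j hj i hi
    have hjT : j ∉ T := (Finset.mem_sdiff.1 hj).2
    have hiT : i ∈ T := (Finset.mem_sdiff.1 hi).1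
    have := hdom i hiT j hjT
    calc u j ^ 2 = |u j| ^ 2 := (sq_abs _).symm
      _ ≤ |u i| ^ 2 := pow_le_pow_left₀ (abs_nonneg _) this 2
      _ = u i ^ 2 := sq_abs _
  -- on T \ Sz, u = -(z - u)
  have heq3 : ∑ i ∈ T \ Sz, u i ^ 2 = ∑ i ∈ T \ Sz, (z i - u i) ^ 2 := by
    apply Finset.sum_congr rfl
    intro i hi
    rw [hz0 i (Finset.mem_sdiff.1 hi).2]; ring
  -- split ∑_T
  have hTsplit : ∑ i ∈ T, (z i - u i) ^ 2
      = (∑ i ∈ T ∩ Sz, (z i - u i) ^ 2) + ∑ i ∈ T \ Sz, (z i - u i) ^ 2 :=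
    (Finset.sum_inter_add_sum_sdiff T Sz _).symm
  -- collect: q over disjoint pieces
  set q : Fin d → ℝ := fun i => (z i - u i) ^ 2 with hqdef
  have hqnn : ∀ i, 0 ≤ q i := fun i => sq_nonneg _
  have hd1 : Disjoint (T ∩ Sz) (T \ Sz) := (Finset.disjoint_sdiff_inter T Sz).symm
  have hd2 : Disjoint ((T ∩ Sz) ∪ (T \ Sz)) (Sz \ T) := by
    rw [Finset.union_comm, Finset.sdiff_union_inter T Sz]
    exact Finset.disjoint_sdiff
  have hbig : (∑ i ∈ T ∩ Sz, q i) + (∑ i ∈ T \ Sz, q i) + (∑ i ∈ Sz \ T, q i)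
      ≤ ∑ i, q i := by
    rw [← Finset.sum_union hd1, ← Finset.sum_union hd2]
    exact Finset.sum_le_sum_of_subset_of_nonneg (Finset.subset_univ _) (fun i _ _ => hqnn i)
  have h1nn : 0 ≤ ∑ i ∈ T ∩ Sz, q i := Finset.sum_nonneg (fun i _ => hqnn i)
  have h2nn : 0 ≤ ∑ i ∈ T \ Sz, q i := Finset.sum_nonneg (fun i _ => hqnn i)
  have h3nn : 0 ≤ ∑ i ∈ Sz \ T, q i := Finset.sum_nonneg (fun i _ => hqnn i)
  rw [hsplit, hoff, hTsplit]
  simp only [hqdef] at *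
  linarith




lemma ls_bound (A : Matrix (Fin m) (Fin d) ℝ) (xS : Fin d → ℝ) (e : Fin m → ℝ)
    (δ3 δ4 : ℝ) (hxS : (supp xS).card ≤ K)
    (hRIP3 : RIP A (3 * K) δ3) (hRIP4 : RIP A (4 * K) δ4)
    (Uprev : Finset (Fin d)) (hUprev : Uprev.card ≤ 3 * K)
    (uprev : Fin d → ℝ) (hLS : LeastSq A (A.mulVec xS + e) Uprev uprev) :
    euclNorm (_root_.restrict (fun i => xS i - uprev i) Uprev)
      ≤ δ4 / Real.sqrt (1 - δ4 ^ 2) * euclNorm (_root_.restrict xS Uprevᶜ)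
        + Real.sqrt (1 + δ3) * euclNorm e / (1 - δ4) := by
  set v : Fin d → ℝ := fun i => xS i - uprev i with hv
  set w : Fin d → ℝ := _root_.restrict v Uprev with hwdef
  set a : ℝ := euclNorm (_root_.restrict xS Uprevᶜ) with ha
  set ε : ℝ := euclNorm e with hε
  have hsw : supp w ⊆ Uprev := supp_restrict_subset v Uprev
  have hw3 : (supp w).card ≤ 3 * K := le_trans (Finset.card_le_card hsw) hUprev
  -- orthogonality
  have orth := hLS.2 w hsw
  have hortho : (∑ i, A.mulVec v i * A.mulVec w i) + (∑ i, e i * A.mulVec w i) = 0 := by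
    rw [← orth, ← Finset.sum_add_distrib]
    apply Finset.sum_congr rfl
    intro i _
    rw [mulVec_lam_sub A xS uprev i]
    simp only [Pi.add_apply]
    ring
  -- ‖w‖² = ⟨v,w⟩
  have hw2 : euclNorm w ^ 2 = ∑ i, v i * w i := by
    rw [euclNorm_sq']
    apply Finset.sum_congr rfl
    intro i _
    by_cases hiU : i ∈ Uprev <;> simp [hwdef, _root_.restrict, hiU] <;> ring
  -- cardinality for rip_inner
  have hsv : supp v ⊆ supp xS ∪ Uprev :=
    le_trans (supp_lam_sub_subset xS uprev) (Finset.union_subset_union (subset_refl _) hLS.1)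
  have hcard4 : (supp v ∪ supp w).card ≤ 4 * K := by
    have hsub : supp v ∪ supp w ⊆ supp xS ∪ Uprev :=
      Finset.union_subset hsv (le_trans hsw Finset.subset_union_right)
    calc (supp v ∪ supp w).card ≤ (supp xS ∪ Uprev).card := Finset.card_le_card hsub
      _ ≤ (supp xS).card + Uprev.card := Finset.card_union_le _ _
      _ ≤ 4 * K := by omega
  -- the two bounds
  have hb1 : (∑ i, v i * w i) - (∑ i, A.mulVec v i * A.mulVec w i)
      ≤ δ4 * euclNorm v * euclNorm w := by
    have := rip_inner hRIP4 v w hcard4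
    rw [abs_le] at this
    linarith [this.1]
  have hAw : euclNorm (A.mulVec w) ≤ Real.sqrt (1 + δ3) * euclNorm w := rip_upper hRIP3 hw3
  have hb2 : -(∑ i, e i * A.mulVec w i) ≤ Real.sqrt (1 + δ3) * ε * euclNorm w := by
    have hneg : -(∑ i, e i * A.mulVec w i) = ∑ i, (fun i => -e i) i * A.mulVec w i := by
      rw [← Finset.sum_neg_distrib]
      apply Finset.sum_congr rfl; intro i _; ring
    have hnorm : euclNorm (fun i => -e i) = ε := by
      rw [hε]; unfold euclNorm; congr 1
      apply Finset.sum_congr rfl; intro i _; ring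
    calc -(∑ i, e i * A.mulVec w i) = ∑ i, (fun i => -e i) i * A.mulVec w i := hneg
      _ ≤ euclNorm (fun i => -e i) * euclNorm (A.mulVec w) := cs _ _
      _ = ε * euclNorm (A.mulVec w) := by rw [hnorm]
      _ ≤ ε * (Real.sqrt (1 + δ3) * euclNorm w) :=
          mul_le_mul_of_nonneg_left hAw (euclNorm_nonneg e)
      _ = Real.sqrt (1 + δ3) * ε * euclNorm w := by ring
  -- main quadratic inequality
  have hmain : euclNorm w ^ 2
      ≤ δ4 * euclNorm v * euclNorm w + Real.sqrt (1 + δ3) * ε * euclNorm w := by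
    have : euclNorm w ^ 2 = ((∑ i, v i * w i) - (∑ i, A.mulVec v i * A.mulVec w i))
        + (-(∑ i, e i * A.mulVec w i)) := by
      rw [hw2]; linarith [hortho]
    rw [this]
    exact add_le_add hb1 hb2
  -- divide by ‖w‖
  have hwle : euclNorm w ≤ δ4 * euclNorm v + Real.sqrt (1 + δ3) * ε := by
    rcases eq_or_lt_of_le (euclNorm_nonneg w) with h0 | h0
    · rw [← h0]
      have h1 : 0 ≤ δ4 * euclNorm v := mul_nonneg (le_of_lt hRIP4.1) (euclNorm_nonneg v)
      have h2 : 0 ≤ Real.sqrt (1 + δ3) * ε := mul_nonneg (Real.sqrt_nonneg _) (euclNorm_nonneg e)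
      linarith
    · nlinarith
  -- Pythagoras
  have hpix : ∀ i, v i ^ 2 = (_root_.restrict xS Uprevᶜ) i ^ 2 + w i ^ 2 := by
    intro i
    by_cases hiU : i ∈ Uprev
    · have h1 : i ∉ Uprevᶜ := by simp [hiU]
      simp [hwdef, _root_.restrict, hiU, h1]
    · have h1 : i ∈ Uprevᶜ := by simp [hiU]
      have h2 : uprev i = 0 := zero_of_not_mem_supp (fun hc => hiU (hLS.1 hc))
      simp [hwdef, hv, _root_.restrict, hiU, h1, h2]
  have hpyth : euclNorm v ^ 2 = a ^ 2 + euclNorm w ^ 2 := by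
    rw [euclNorm_sq' v, ha, euclNorm_sq', euclNorm_sq' w, ← Finset.sum_add_distrib]
    exact Finset.sum_congr rfl (fun i _ => hpix i)
  have hvnorm : euclNorm v = Real.sqrt (a ^ 2 + euclNorm w ^ 2) := by
    rw [← hpyth]
    exact (Real.sqrt_sq (euclNorm_nonneg v)).symm
  -- solve
  have hineq : euclNorm w ≤ δ4 * Real.sqrt (a ^ 2 + euclNorm w ^ 2) + Real.sqrt (1 + δ3) * ε := by
    rw [← hvnorm]; exact hwle
  have := solve_implicit hRIP4.1 hRIP4.2.1 (euclNorm_nonneg _)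
    (mul_nonneg (Real.sqrt_nonneg _) (euclNorm_nonneg e)) (euclNorm_nonneg w) hineq
  calc euclNorm w ≤ δ4 / Real.sqrt (1 - δ4 ^ 2) * a + Real.sqrt (1 + δ3) * ε / (1 - δ4) := this
    _ = δ4 / Real.sqrt (1 - δ4 ^ 2) * a + Real.sqrt (1 + δ3) * ε / (1 - δ4) := rfl


lemma euclNorm_congr {d : ℕ} {x y : Fin d → ℝ} (hxy : ∀ i, x i = y i) : euclNorm x = euclNorm y := by
  unfold euclNorm; congr 1; exact Finset.sum_congr rfl (fun i _ => by rw [hxy i])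

lemma triangle_sub {d : ℕ} (x y : Fin d → ℝ) :
    euclNorm (fun i => x i - y i) ≤ euclNorm x + euclNorm y := by
  have h1 : euclNorm (fun i => x i - y i) = euclNorm (fun i => x i + (fun j => -y j) i) :=
    euclNorm_congr (fun i => by simp; ring)
  have h2 : euclNorm (fun j => -y j) = euclNorm y := by
    unfold euclNorm; congr 1; exact Finset.sum_congr rfl (fun i _ => by ring)
  rw [h1, ← h2]
  exact triangle x _

lemma sqrt_two_trick {X Y : ℝ} (hX : 0 ≤ X) (hY : 0 ≤ Y) :
    Real.sqrt X + Real.sqrt Y ≤ Real.sqrt 2 * Real.sqrt (X + Y) := by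
  rw [← Real.sqrt_mul (by norm_num)]
  have h1 : Real.sqrt X + Real.sqrt Y = Real.sqrt ((Real.sqrt X + Real.sqrt Y) ^ 2) :=
    (Real.sqrt_sq (by positivity)).symm
  rw [h1]
  apply Real.sqrt_le_sqrt
  have hXs : Real.sqrt X ^ 2 = X := Real.sq_sqrt hX
  have hYs : Real.sqrt Y ^ 2 = Y := Real.sq_sqrt hY
  nlinarith [sq_nonneg (Real.sqrt X - Real.sqrt Y)]


lemma ident_bound (A : Matrix (Fin m) (Fin d) ℝ) (xS : Fin d → ℝ) (e : Fin m → ℝ)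
    (δ4 : ℝ) (hxS : (supp xS).card ≤ K) (hRIP4 : RIP A (4 * K) δ4)
    (Sprev : Finset (Fin d)) (hSprevCard : Sprev.card = K)
    (xprev : Fin d → ℝ) (hxp : supp xprev ⊆ Sprev)
    (h : Finset (Fin d)) (hhcard : h.card = 2 * K)
    (hident : ∀ i ∈ h, ∀ j ∉ h,
      |A.transpose.mulVec (A.mulVec xS + e - A.mulVec xprev) j| ≤
        |A.transpose.mulVec (A.mulVec xS + e - A.mulVec xprev) i|)
    (U : Finset (Fin d)) (hU : U = Sprev ∪ h) :
    euclNorm (_root_.restrict xS Uᶜ)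
      ≤ Real.sqrt 2 * δ4 * euclNorm (fun i => xS i - xprev i)
        + Real.sqrt (2 * (1 + δ4)) * euclNorm e := by
  set Δ : Fin d → ℝ := fun i => xS i - xprev i with hΔ
  set V : Finset (Fin d) := supp xS ∪ Sprev with hV
  set g : Fin d → ℝ := A.transpose.mulVec (A.mulVec xS + e - A.mulVec xprev) with hg
  set s0 : Finset (Fin d) := V \ U with hs0
  set t0 : Finset (Fin d) := h \ V with ht0
  have hVcard : V.card ≤ 2 * K := by
    calc V.card ≤ (supp xS).card + Sprev.card := Finset.card_union_le _ _
      _ ≤ 2 * K := by omega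
  have hΔ0 : ∀ i, i ∉ V → Δ i = 0 := by
    intro i hi
    rw [hV, Finset.mem_union] at hi
    push_neg at hi
    have h1 : xS i = 0 := zero_of_not_mem_supp hi.1
    have h2 : xprev i = 0 := zero_of_not_mem_supp (fun hc => hi.2 (hxp hc))
    rw [hΔ]; simp [h1, h2]
  have hSprevU : Sprev ⊆ U := by rw [hU]; exact Finset.subset_union_left
  have hhU : h ⊆ U := by rw [hU]; exact Finset.subset_union_right
  -- restrict xS Uᶜ = restrict Δ s0
  have hfun : ∀ i, _root_.restrict xS Uᶜ i = _root_.restrict Δ s0 i := by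
    intro i
    by_cases hiU : i ∈ U
    · have h1 : i ∉ Uᶜ := by simp [hiU]
      have h2 : i ∉ s0 := by rw [hs0]; simp [hiU]
      simp [_root_.restrict, h1, h2]
    · have h1 : i ∈ Uᶜ := by simp [hiU]
      have hxpi : xprev i = 0 := zero_of_not_mem_supp (fun hc => hiU (hSprevU (hxp hc)))
      by_cases hiV : i ∈ V
      · have h2 : i ∈ s0 := by rw [hs0]; exact Finset.mem_sdiff.2 ⟨hiV, hiU⟩
        simp [_root_.restrict, h1, h2, hΔ, hxpi]
      · have h2 : i ∉ s0 := by rw [hs0]; simp [hiV]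
        have hxSi : xS i = 0 := by
          apply zero_of_not_mem_supp
          intro hc
          exact hiV (by rw [hV]; exact Finset.mem_union_left _ hc)
        simp [_root_.restrict, h1, h2, hxSi]
  -- G = g - Δ
  set G : Fin d → ℝ := fun i => g i - Δ i with hG
  -- step: ‖Δ_{s0}‖ ≤ ‖g_{s0}‖ + ‖G_{s0}‖
  have hstep1 : euclNorm (_root_.restrict Δ s0)
      ≤ euclNorm (_root_.restrict g s0) + euclNorm (_root_.restrict G s0) := by
    have heq : ∀ i, _root_.restrict Δ s0 i
        = _root_.restrict g s0 i - _root_.restrict G s0 i := by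
      intro i
      by_cases hi : i ∈ s0 <;> simp [_root_.restrict, hi, hG]
    rw [euclNorm_congr heq]
    exact triangle_sub _ _
  -- card comparison
  have hcard_st : s0.card ≤ t0.card := by
    have h1 : s0 ⊆ V \ h := by
      rw [hs0]
      exact Finset.sdiff_subset_sdiff (le_refl _) hhU
    have h2 : (V \ h).card + (V ∩ h).card = V.card := Finset.card_sdiff_add_card_inter V h
    have h3 : (h \ V).card + (h ∩ V).card = h.card := Finset.card_sdiff_add_card_inter h V
    have h4 : (V ∩ h).card = (h ∩ V).card := by rw [Finset.inter_comm]
    have h5 : s0.card ≤ (V \ h).card := Finset.card_le_card h1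
    rw [ht0]
    omega
  -- ‖g_{s0}‖ ≤ ‖g_{t0}‖
  have hstep2 : euclNorm (_root_.restrict g s0) ≤ euclNorm (_root_.restrict g t0) := by
    unfold euclNorm
    apply Real.sqrt_le_sqrt
    show ∑ i, (_root_.restrict g s0) i ^ 2 ≤ ∑ i, (_root_.restrict g t0) i ^ 2
    rw [show ∑ i, (_root_.restrict g s0) i ^ 2 = ∑ i, (if i ∈ s0 then g i else 0) ^2 from rfl,
        show ∑ i, (_root_.restrict g t0) i ^ 2 = ∑ i, (if i ∈ t0 then g i else 0) ^2 from rfl,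
        sumsq_restrict, sumsq_restrict]
    apply sum_dom _ _ _ (fun i => sq_nonneg _) hcard_st
    intro j hj i hi
    have hjh : j ∉ h := by
      intro hc
      exact (Finset.mem_sdiff.1 hj).2 (hhU hc)
    have hih : i ∈ h := (Finset.mem_sdiff.1 hi).1
    have := hident i hih j hjh
    calc g j ^ 2 = |g j| ^ 2 := (sq_abs _).symm
      _ ≤ |g i| ^ 2 := pow_le_pow_left₀ (abs_nonneg _) this 2
      _ = g i ^ 2 := sq_abs _
  -- g = G on t0
  have hstep3 : euclNorm (_root_.restrict g t0) = euclNorm (_root_.restrict G t0) := by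
    apply euclNorm_congr
    intro i
    by_cases hi : i ∈ t0
    · have hiV : i ∉ V := (Finset.mem_sdiff.1 hi).2
      simp [_root_.restrict, hi, hG, hΔ0 i hiV]
    · simp [_root_.restrict, hi]
  -- √2 combination
  set W : Finset (Fin d) := s0 ∪ t0 with hW
  have hdisj : Disjoint s0 t0 := by
    apply Finset.disjoint_left.2
    intro i his hit
    exact (Finset.mem_sdiff.1 his).2 (hhU (Finset.mem_sdiff.1 hit).1)
  have hstep4 : euclNorm (_root_.restrict G s0) + euclNorm (_root_.restrict G t0)
      ≤ Real.sqrt 2 * euclNorm (_root_.restrict G W) := by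
    have hXY : (∑ i, (_root_.restrict G s0) i ^ 2) + (∑ i, (_root_.restrict G t0) i ^ 2)
        = ∑ i, (_root_.restrict G W) i ^ 2 := by
      rw [show ∑ i, (_root_.restrict G s0) i ^ 2 = ∑ i, (if i ∈ s0 then G i else 0) ^2 from rfl,
          show ∑ i, (_root_.restrict G t0) i ^ 2 = ∑ i, (if i ∈ t0 then G i else 0) ^2 from rfl,
          show ∑ i, (_root_.restrict G W) i ^ 2 = ∑ i, (if i ∈ W then G i else 0) ^2 from rfl,
          sumsq_restrict, sumsq_restrict, sumsq_restrict, hW]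
      exact (Finset.sum_union hdisj).symm
    unfold euclNorm
    rw [← hXY]
    exact sqrt_two_trick (by positivity) (by positivity)
  -- RIP bounds on W
  have hWsub : W ⊆ V ∪ h := by
    rw [hW, hs0, ht0]
    apply Finset.union_subset
    · exact le_trans (Finset.sdiff_subset) Finset.subset_union_left
    · exact le_trans (Finset.sdiff_subset) Finset.subset_union_right
  have hWcard : (W ∪ supp Δ).card ≤ 4 * K := by
    have hsuppΔ : supp Δ ⊆ V := by
      intro i hi
      by_contra hiV
      exact (by simpa [supp] using hi : Δ i ≠ 0) (hΔ0 i hiV)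
    have : W ∪ supp Δ ⊆ V ∪ h := Finset.union_subset hWsub
      (le_trans hsuppΔ Finset.subset_union_left)
    calc (W ∪ supp Δ).card ≤ (V ∪ h).card := Finset.card_le_card this
      _ ≤ V.card + h.card := Finset.card_union_le _ _
      _ ≤ 4 * K := by omega
  have hWcard' : W.card ≤ 4 * K := by
    calc W.card ≤ (W ∪ supp Δ).card := Finset.card_le_card Finset.subset_union_left
      _ ≤ 4 * K := hWcard
  -- G decomposition: G = (AᵀAΔ - Δ) + Aᵀe
  have hGdec : ∀ i, G i = (fun j => A.transpose.mulVec (A.mulVec Δ) j - Δ j) i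
      + A.transpose.mulVec e i := by
    intro i
    have hr : ∀ j, (A.mulVec xS + e - A.mulVec xprev) j = A.mulVec Δ j + e j := by
      intro j
      rw [hΔ, mulVec_lam_sub A xS xprev j]
      simp only [Pi.sub_apply, Pi.add_apply]
      ring
    have harg : (A.mulVec xS + e - A.mulVec xprev) = fun j => A.mulVec Δ j + e j := funext hr
    have h2 : A.transpose.mulVec (A.mulVec xS + e - A.mulVec xprev) i
        = A.transpose.mulVec (A.mulVec Δ) i + A.transpose.mulVec e i := by
      rw [harg]
      exact mulVec_lam_add A.transpose (A.mulVec Δ) e i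
    show g i - Δ i = _
    rw [hg, h2]
    ring
  have hstep5 : euclNorm (_root_.restrict G W)
      ≤ δ4 * euclNorm Δ + Real.sqrt (1 + δ4) * euclNorm e := by
    have heq : ∀ i, _root_.restrict G W i
        = _root_.restrict (fun j => A.transpose.mulVec (A.mulVec Δ) j - Δ j) W i
          + _root_.restrict (A.transpose.mulVec e) W i := by
      intro i
      by_cases hi : i ∈ W
      · simp only [_root_.restrict, hi, if_pos]
        exact hGdec i
      · simp [_root_.restrict, hi]
    rw [euclNorm_congr heq]
    calc euclNorm (fun i => _root_.restrict (fun j => A.transpose.mulVec (A.mulVec Δ) j - Δ j) W i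
          + _root_.restrict (A.transpose.mulVec e) W i)
        ≤ euclNorm (_root_.restrict (fun j => A.transpose.mulVec (A.mulVec Δ) j - Δ j) W)
          + euclNorm (_root_.restrict (A.transpose.mulVec e) W) := triangle _ _
      _ ≤ δ4 * euclNorm Δ + Real.sqrt (1 + δ4) * euclNorm e :=
          add_le_add (rip_corr hRIP4 Δ W hWcard) (rip_err hRIP4 e W hWcard')
  -- combine
  have hfinal : euclNorm (_root_.restrict xS Uᶜ)
      ≤ Real.sqrt 2 * (δ4 * euclNorm Δ + Real.sqrt (1 + δ4) * euclNorm e) := by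
    calc euclNorm (_root_.restrict xS Uᶜ) = euclNorm (_root_.restrict Δ s0) := euclNorm_congr hfun
      _ ≤ euclNorm (_root_.restrict g s0) + euclNorm (_root_.restrict G s0) := hstep1
      _ ≤ euclNorm (_root_.restrict g t0) + euclNorm (_root_.restrict G s0) := by
          linarith [hstep2]
      _ = euclNorm (_root_.restrict G s0) + euclNorm (_root_.restrict G t0) := by
          rw [hstep3]; ring
      _ ≤ Real.sqrt 2 * euclNorm (_root_.restrict G W) := hstep4
      _ ≤ Real.sqrt 2 * (δ4 * euclNorm Δ + Real.sqrt (1 + δ4) * euclNorm e) :=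
          mul_le_mul_of_nonneg_left hstep5 (Real.sqrt_nonneg 2)
  calc euclNorm (_root_.restrict xS Uᶜ)
      ≤ Real.sqrt 2 * (δ4 * euclNorm Δ + Real.sqrt (1 + δ4) * euclNorm e) := hfinal
    _ = Real.sqrt 2 * δ4 * euclNorm Δ + (Real.sqrt 2 * Real.sqrt (1 + δ4)) * euclNorm e := by ring
    _ = Real.sqrt 2 * δ4 * euclNorm Δ + Real.sqrt (2 * (1 + δ4)) * euclNorm e := by
        rw [← Real.sqrt_mul (by norm_num : (0:ℝ) ≤ 2)]



lemma final_algebra (δ δ3 a ε w Δn X : ℝ)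
    (hδ0 : 0 < δ) (hδ1 : δ < 1) (hδ30 : 0 < δ3) (ha : 0 ≤ a) (hε : 0 ≤ ε)
    (hw : 0 ≤ w) (hΔn : 0 ≤ Δn)
    (hwb : w ≤ δ / Real.sqrt (1 - δ ^ 2) * a + Real.sqrt (1 + δ3) * ε / (1 - δ))
    (hΔ : Δn ≤ Real.sqrt (a ^ 2 + 3 * w ^ 2))
    (hX : X ≤ Real.sqrt 2 * δ * Δn + Real.sqrt (2 * (1 + δ)) * ε) :
    X ≤ Real.sqrt (2 * δ ^ 2 * (1 + 2 * δ ^ 2) / (1 - δ ^ 2)) * a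
      + (δ * Real.sqrt (6 * (1 + δ3)) / (1 - δ) + Real.sqrt (2 * (1 + δ))) * ε := by
  have hδsq : (0:ℝ) < 1 - δ ^ 2 := by nlinarith
  set s : ℝ := Real.sqrt (1 - δ ^ 2) with hs
  have hspos : 0 < s := Real.sqrt_pos.2 hδsq
  have hssq : s ^ 2 = 1 - δ ^ 2 := Real.sq_sqrt (le_of_lt hδsq)
  set P : ℝ := δ / s * a with hP
  set Q : ℝ := Real.sqrt (1 + δ3) * ε / (1 - δ) with hQ
  have hPnn : 0 ≤ P := by positivity
  have hQnn : 0 ≤ Q := by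
    apply div_nonneg (mul_nonneg (Real.sqrt_nonneg _) hε)
    linarith
  have h3 : Real.sqrt 3 ^ 2 = (3:ℝ) := Real.sq_sqrt (by norm_num)
  have h3nn : (0:ℝ) ≤ Real.sqrt 3 := Real.sqrt_nonneg 3
  -- monotone step
  have h2 : Real.sqrt (a ^ 2 + 3 * w ^ 2)
      ≤ Real.sqrt (a ^ 2 + (Real.sqrt 3 * P + Real.sqrt 3 * Q) ^ 2) := by
    apply Real.sqrt_le_sqrt
    have hexp : (Real.sqrt 3 * P + Real.sqrt 3 * Q) ^ 2 = 3 * (P + Q) ^ 2 := by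
      linear_combination (P + Q) ^ 2 * h3
    nlinarith [hexp, hwb, hw, hPnn, hQnn]
  have h4 : Real.sqrt (a ^ 2 + (Real.sqrt 3 * P + Real.sqrt 3 * Q) ^ 2)
      ≤ Real.sqrt (a ^ 2 + (Real.sqrt 3 * P) ^ 2) + Real.sqrt 3 * Q :=
    sqrt_add_sq_le (mul_nonneg h3nn hPnn) (mul_nonneg h3nn hQnn)
  -- closed form for √(a² + 3P²)
  have h5 : a ^ 2 + (Real.sqrt 3 * P) ^ 2 = (1 + 2 * δ ^ 2) / (1 - δ ^ 2) * a ^ 2 := by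
    have hs2 : s ≠ 0 := ne_of_gt hspos
    have hexp : (Real.sqrt 3 * P) ^ 2 = 3 * P ^ 2 := by linear_combination P ^ 2 * h3
    rw [hexp, hP]
    have hne : 1 - δ ^ 2 ≠ 0 := ne_of_gt hδsq
    field_simp
    linear_combination (-3 * a ^ 2 * δ ^ 2) * hssq
  have h5' : Real.sqrt (a ^ 2 + (Real.sqrt 3 * P) ^ 2)
      = Real.sqrt ((1 + 2 * δ ^ 2) / (1 - δ ^ 2)) * a := by
    rw [h5, Real.sqrt_mul (by positivity), Real.sqrt_sq ha]
  -- constant identities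
  have h6 : Real.sqrt 2 * δ * Real.sqrt ((1 + 2 * δ ^ 2) / (1 - δ ^ 2))
      = Real.sqrt (2 * δ ^ 2 * (1 + 2 * δ ^ 2) / (1 - δ ^ 2)) := by
    rw [show 2 * δ ^ 2 * (1 + 2 * δ ^ 2) / (1 - δ ^ 2)
        = 2 * δ ^ 2 * ((1 + 2 * δ ^ 2) / (1 - δ ^ 2)) by ring]
    rw [Real.sqrt_mul (by positivity), Real.sqrt_mul (by norm_num : (0:ℝ) ≤ 2),
        Real.sqrt_sq (le_of_lt hδ0)]
  have h7 : Real.sqrt 2 * δ * (Real.sqrt 3 * Q) = δ * Real.sqrt (6 * (1 + δ3)) / (1 - δ) * ε := by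
    rw [hQ]
    rw [show (6:ℝ) * (1 + δ3) = 2 * 3 * (1 + δ3) by ring]
    rw [Real.sqrt_mul (by norm_num : (0:ℝ) ≤ 2*3), Real.sqrt_mul (by norm_num : (0:ℝ) ≤ 2)]
    field_simp
  -- combine
  have hchain : Δn ≤ Real.sqrt ((1 + 2 * δ ^ 2) / (1 - δ ^ 2)) * a + Real.sqrt 3 * Q := by
    calc Δn ≤ Real.sqrt (a ^ 2 + 3 * w ^ 2) := hΔ
      _ ≤ Real.sqrt (a ^ 2 + (Real.sqrt 3 * P + Real.sqrt 3 * Q) ^ 2) := h2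
      _ ≤ Real.sqrt (a ^ 2 + (Real.sqrt 3 * P) ^ 2) + Real.sqrt 3 * Q := h4
      _ = Real.sqrt ((1 + 2 * δ ^ 2) / (1 - δ ^ 2)) * a + Real.sqrt 3 * Q := by rw [h5']
  have hc2 : 0 ≤ Real.sqrt 2 * δ := mul_nonneg (Real.sqrt_nonneg 2) (le_of_lt hδ0)
  calc X ≤ Real.sqrt 2 * δ * Δn + Real.sqrt (2 * (1 + δ)) * ε := hX
    _ ≤ Real.sqrt 2 * δ * (Real.sqrt ((1 + 2 * δ ^ 2) / (1 - δ ^ 2)) * a + Real.sqrt 3 * Q)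
        + Real.sqrt (2 * (1 + δ)) * ε := by
        have := mul_le_mul_of_nonneg_left hchain hc2
        linarith
    _ = Real.sqrt 2 * δ * Real.sqrt ((1 + 2 * δ ^ 2) / (1 - δ ^ 2)) * a
        + Real.sqrt 2 * δ * (Real.sqrt 3 * Q) + Real.sqrt (2 * (1 + δ)) * ε := by ring
    _ = Real.sqrt (2 * δ ^ 2 * (1 + 2 * δ ^ 2) / (1 - δ ^ 2)) * a
        + (δ * Real.sqrt (6 * (1 + δ3)) / (1 - δ) + Real.sqrt (2 * (1 + δ))) * ε := by
        rw [h6, h7]; ring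

end CoSaMPAux

open CoSaMPAux in
/-- Lemma 1: one CoSaMP iteration decays the missed-energy metric
`‖(x_S)_{\bar{U^n}}‖` with rate `ρ_{4K}`. -/
theorem cosamp_metric_decay
    {m d K : ℕ} (A : Matrix (Fin m) (Fin d) ℝ) (xS : Fin d → ℝ) (e : Fin m → ℝ)
    (δ3 δ4 : ℝ)
    (hxS : (supp xS).card ≤ K)
    (hRIP3 : RIP A (3 * K) δ3) (hRIP4 : RIP A (4 * K) δ4)
    (Uprev : Finset (Fin d)) (hUprev : Uprev.card ≤ 3 * K)
    (uprev : Fin d → ℝ) (hLS : LeastSq A (A.mulVec xS + e) Uprev uprev)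
    (Sprev : Finset (Fin d)) (hSprevU : Sprev ⊆ Uprev) (hSprevCard : Sprev.card = K)
    (hThresh : ∀ i ∈ Sprev, ∀ j ∉ Sprev, |uprev j| ≤ |uprev i|)
    (xprev : Fin d → ℝ) (hxprev : xprev = restrict uprev Sprev)
    (h : Finset (Fin d)) (hhcard : h.card = 2 * K)
    (hident : ∀ i ∈ h, ∀ j ∉ h,
      |A.transpose.mulVec (A.mulVec xS + e - A.mulVec xprev) j| ≤
        |A.transpose.mulVec (A.mulVec xS + e - A.mulVec xprev) i|)
    (U : Finset (Fin d)) (hU : U = Sprev ∪ h) :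
    euclNorm (restrict xS Uᶜ) ≤
      Real.sqrt (2 * δ4 ^ 2 * (1 + 2 * δ4 ^ 2) / (1 - δ4 ^ 2)) *
          euclNorm (restrict xS Uprevᶜ) +
        (δ4 * Real.sqrt (6 * (1 + δ3)) / (1 - δ4) + Real.sqrt (2 * (1 + δ4))) *
          euclNorm e := by
  -- setup
  have hδ4pos := hRIP4.1
  have hδ4lt := hRIP4.2.1
  have hδ3pos := hRIP3.1
  set a : ℝ := euclNorm (restrict xS Uprevᶜ) with ha
  set ε : ℝ := euclNorm e with hε
  set w : Fin d → ℝ := restrict (fun i => xS i - uprev i) Uprev with hw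
  set Δ : Fin d → ℝ := fun i => xS i - xprev i with hΔdef
  set z : Fin d → ℝ := restrict xS Uprev with hz
  -- support of xprev
  have hxp_supp : supp xprev ⊆ Sprev := by
    rw [hxprev]; exact supp_restrict_subset uprev Sprev
  -- least-squares bound
  have hwb : euclNorm w ≤ δ4 / Real.sqrt (1 - δ4 ^ 2) * a
      + Real.sqrt (1 + δ3) * ε / (1 - δ4) :=
    ls_bound A xS e δ3 δ4 hxS hRIP3 hRIP4 Uprev hUprev uprev hLS
  -- identification bound
  have hX : euclNorm (restrict xS Uᶜ)
      ≤ Real.sqrt 2 * δ4 * euclNorm Δ + Real.sqrt (2 * (1 + δ4)) * ε :=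
    ident_bound A xS e δ4 hxS hRIP4 Sprev hSprevCard xprev hxp_supp h hhcard hident U hU
  -- thresholding bound
  have hsuppz : supp z ⊆ supp xS := by
    intro i hi
    simp only [supp, Finset.mem_filter, Finset.mem_univ, true_and] at hi ⊢
    intro hxi
    apply hi
    rw [hz]
    by_cases hiU : i ∈ Uprev <;> simp [_root_.restrict, hiU, hxi]
  have hSz : (supp z).card ≤ Sprev.card := by
    rw [hSprevCard]
    exact le_trans (Finset.card_le_card hsuppz) hxS
  have hthr : ∑ i, (z i - restrict uprev Sprev i) ^ 2 ≤ 3 * ∑ i, (z i - uprev i) ^ 2 :=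
    threshold_lemma uprev z Sprev hSz hThresh
  -- z - uprev = w pointwise
  have hzu : ∀ i, z i - uprev i = w i := by
    intro i
    by_cases hiU : i ∈ Uprev
    · simp [hz, hw, _root_.restrict, hiU]
    · have h0 : uprev i = 0 := zero_of_not_mem_supp (fun hc => hiU (hLS.1 hc))
      simp [hz, hw, _root_.restrict, hiU, h0]
  have hthr2 : ∑ i, (z i - xprev i) ^ 2 ≤ 3 * euclNorm w ^ 2 := by
    rw [euclNorm_sq]
    calc ∑ i, (z i - xprev i) ^ 2 = ∑ i, (z i - restrict uprev Sprev i) ^ 2 := by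
          rw [hxprev]
      _ ≤ 3 * ∑ i, (z i - uprev i) ^ 2 := hthr
      _ = 3 * ∑ i, w i ^ 2 := by
          congr 1
          exact Finset.sum_congr rfl (fun i _ => by rw [hzu i])
  -- Pythagoras for Δ
  have hpyth : euclNorm Δ ^ 2 = (∑ i, (z i - xprev i) ^ 2) + a ^ 2 := by
    rw [euclNorm_sq, ha, euclNorm_sq, ← Finset.sum_add_distrib]
    apply Finset.sum_congr rfl
    intro i _
    by_cases hiU : i ∈ Uprev
    · have h1 : i ∉ Uprevᶜ := by simp [hiU]
      simp [hΔdef, hz, _root_.restrict, hiU, h1]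
    · have h1 : i ∈ Uprevᶜ := by simp [hiU]
      have h0 : xprev i = 0 :=
        zero_of_not_mem_supp (fun hc => hiU (hSprevU (hxp_supp hc)))
      simp [hΔdef, hz, _root_.restrict, hiU, h1, h0]
  have hΔle : euclNorm Δ ≤ Real.sqrt (a ^ 2 + 3 * euclNorm w ^ 2) := by
    calc euclNorm Δ = Real.sqrt (euclNorm Δ ^ 2) := (Real.sqrt_sq (euclNorm_nonneg Δ)).symm
      _ ≤ Real.sqrt (a ^ 2 + 3 * euclNorm w ^ 2) := by
          apply Real.sqrt_le_sqrt
          rw [hpyth]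
          linarith [hthr2]
  -- final algebra
  exact final_algebra δ4 δ3 a ε (euclNorm w) (euclNorm Δ) (euclNorm (restrict xS Uᶜ))
    hδ4pos hδ4lt hδ3pos (euclNorm_nonneg _) (euclNorm_nonneg e)
    (euclNorm_nonneg w) (euclNorm_nonneg Δ) hwb hΔle hX
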